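/- Let d ≥ 2 and 1 ≤ k ≤ d be integers. Then (1/d^d) · Σ_{ℓ∈P_d} binom(d,ℓ)² · multinom(d, b(ℓ)) ≤ d! · ( d! · d^{−k} · p(d−k) + 2^{−(d−k)/2} ), where p(m) denotes the number of partitions of the integer m (with p(0) = 1). -/

import Mathlib

open Finset

/-- The standard additive character `e(y) = exp(2πi Tr(y)/p)` on a finite field of
characteristic `p`, where `Tr` is the field trace to `ZMod p`. -/
noncomputable def charE (p : ℕ) {F : Type} [Field F] [Fintype F] [Algebra (ZMod p) F]
    (y : F) : ℂ :=
  Complex.exp (2 * Real.pi * Complex.I * ((Algebra.trace (ZMod p) F y).val : ℂ) / (p : ℂ))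

/-- The moment curve `γ(ξ) = (ξ, ξ², …, ξ^d)`. -/
def mom (d : ℕ) {F : Type} [Monoid F] (ξ : F) : Fin d → F := fun i => ξ ^ ((i : ℕ) + 1)

/-- The extension operator `(fσ)^∨(x) = q⁻¹ ∑_ξ f(ξ) e(x·γ(ξ))`. -/
noncomputable def extOp (p d : ℕ) {F : Type} [Field F] [Fintype F] [Algebra (ZMod p) F]
    (f : F → ℂ) (x : Fin d → F) : ℂ :=
  (Fintype.card F : ℂ)⁻¹ * ∑ ξ : F, f ξ * charE p (∑ i, x i * mom d ξ i)

/-- `‖(fσ)^∨‖_{L^{2d}(F_q^d, dx)}`. -/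
noncomputable def extNorm (p d : ℕ) {F : Type} [Field F] [Fintype F] [Algebra (ZMod p) F]
    (f : F → ℂ) : ℝ :=
  (∑ x : Fin d → F, ‖extOp p d f x‖ ^ (2 * d)) ^ ((1 : ℝ) / (2 * d))

/-- `‖f‖_{L²(Γ, dσ)}`. -/
noncomputable def l2Norm {F : Type} [Fintype F] (f : F → ℂ) : ℝ :=
  Real.sqrt ((Fintype.card F : ℝ)⁻¹ * ∑ ξ : F, ‖f ξ‖ ^ 2)

/-- The set of partitions of `d`, written as decreasing `d`-tuples. -/
def Pd (d : ℕ) : Finset (Fin d → Fin (d + 1)) :=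
  univ.filter fun ℓ =>
    (∀ i j : Fin d, i ≤ j → (ℓ j : ℕ) ≤ (ℓ i : ℕ)) ∧ (∑ i, (ℓ i : ℕ)) = d

/-- `ℓ! = ℓ₁!·…·ℓ_d!`. -/
def lfact {d : ℕ} (ℓ : Fin d → Fin (d + 1)) : ℕ := ∏ i, Nat.factorial (ℓ i)

/-- `binom(d,ℓ) = d!/ℓ!`. -/
def dchoose (d : ℕ) (ℓ : Fin d → Fin (d + 1)) : ℕ := Nat.factorial d / lfact ℓ

/-- `b_j(ℓ) = #{i : ℓ_i = j}`. -/
def bj {d : ℕ} (ℓ : Fin d → Fin (d + 1)) (j : ℕ) : ℕ :=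
  (univ.filter fun i => (ℓ i : ℕ) = j).card

/-- `b_0(ℓ) = #{i : ℓ_i = 0} + (q - d)`. -/
def b0 (q : ℕ) {d : ℕ} (ℓ : Fin d → Fin (d + 1)) : ℕ := bj ℓ 0 + (q - d)

/-- `binom(q, b(ℓ)) = q!/(b_0(ℓ)!·b_1(ℓ)!·…·b_d(ℓ)!)`. -/
def qmultinom (q d : ℕ) (ℓ : Fin d → Fin (d + 1)) : ℕ :=
  Nat.factorial q / ((b0 q ℓ).factorial * ∏ j ∈ Finset.Icc 1 d, (bj ℓ j).factorial)

/-- The conjectured optimal constant raised to the power `2d`: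
`A = q^{-d} ∑_{ℓ∈P_d} binom(d,ℓ)² binom(q,b(ℓ))`. -/
noncomputable def Aconst (q d : ℕ) : ℝ :=
  ((q : ℝ) ^ d)⁻¹ * ∑ ℓ ∈ Pd d, ((dchoose d ℓ : ℝ) ^ 2 * (qmultinom q d ℓ : ℝ))

/-- The elementary symmetric functions `e_k` obtained from the power sums
`ζ₁, …, ζ_d` via Newton's identities. -/
noncomputable def newtonE {F : Type} [Field F] {d : ℕ} (ζ : Fin d → F) : ℕ → F
  | 0 => 1
  | k + 1 =>
      (((k + 1 : ℕ) : F))⁻¹ *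
        ∑ i ∈ Finset.range (k + 1),
          (-1 : F) ^ i * newtonE ζ (k - i) * (if h : i < d then ζ ⟨i, h⟩ else 0)

/-- The polynomial `P_ζ(X) = X^d − s₁X^{d−1} + … + (−1)^d s_d` whose elementary symmetric
coefficients are obtained from the power sums `ζ` via Newton's identities. -/
noncomputable def Pzeta {F : Type} [Field F] {d : ℕ} (ζ : Fin d → F) : Polynomial F :=
  ∑ k ∈ Finset.range (d + 1), Polynomial.C ((-1 : F) ^ k * newtonE ζ k) * Polynomial.X ^ (d - k)

/-- `W_ℓ`: the set of `ζ` such that `P_ζ` splits completely over `F` with root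
multiplicities given by the nonzero parts of `ℓ`. -/
def Wset (F : Type) [Field F] {d : ℕ} (ℓ : Fin d → Fin (d + 1)) : Set (Fin d → F) :=
  {ζ | ∃ r : Fin d → F,
    (∀ i j : Fin d, (ℓ i : ℕ) ≠ 0 → (ℓ j : ℕ) ≠ 0 → i ≠ j → r i ≠ r j) ∧
    Pzeta ζ = ∏ i : Fin d, (Polynomial.X - Polynomial.C (r i)) ^ (ℓ i : ℕ)}

/-- `W_ℓ` as a finite set. -/
noncomputable def Wfin {F : Type} [Field F] [Fintype F] {d : ℕ}
    (ℓ : Fin d → Fin (d + 1)) : Finset (Fin d → F) :=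
  (Set.toFinite (Wset F ℓ)).toFinset

/-- The symmetric sum `Σ_ℓ(x) = ∑_{τ} x_{τ(1)}^{ℓ₁} ⋯ x_{τ(d)}^{ℓ_d}`, the sum running
over all bijections `τ : {1,…,q} → F_q` (a sum of `q!` terms). -/
noncomputable def symSumF {F : Type} [Fintype F] [DecidableEq F] {d : ℕ}
    (ℓ : Fin d → Fin (d + 1)) (x : F → ℝ) : ℝ :=
  ∑ τ : Fin (Fintype.card F) ≃ F, ∏ i : Fin d,
    if h : (i : ℕ) < Fintype.card F then x (τ ⟨(i : ℕ), h⟩) ^ (ℓ i : ℕ) else 0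

/-- The symmetric sum `Σ_ℓ(x) = ∑_{τ∈S_q} x_{τ(1)}^{ℓ₁} ⋯ x_{τ(d)}^{ℓ_d}` in `q` variables. -/
noncomputable def symSum (d q : ℕ) (ℓ : Fin d → Fin (d + 1)) (x : Fin q → ℝ) : ℝ :=
  ∑ τ : Equiv.Perm (Fin q), ∏ i : Fin d,
    if h : (i : ℕ) < q then x (τ ⟨(i : ℕ), h⟩) ^ (ℓ i : ℕ) else 0

/-- Dominance order on partitions. -/
def domLE {d : ℕ} (ℓ ℓ' : Fin d → Fin (d + 1)) : Prop :=
  ∀ k : Fin d, (∑ i ∈ univ.filter (· ≤ k), (ℓ i : ℕ)) ≤ ∑ i ∈ univ.filter (· ≤ k), (ℓ' i : ℕ)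

/-- `ρ(ℓ)`: the number of nonzero parts of `ℓ`. -/
def rho {d : ℕ} (ℓ : Fin d → Fin (d + 1)) : ℕ := (univ.filter fun i => (ℓ i : ℕ) ≠ 0).card

/-- The partition `(1,1,…,1)`. -/
def onesPart (d : ℕ) : Fin d → Fin (d + 1) := fun _ => 1

/-- The partition `(2,1,…,1,0)`. -/
def part21 (d : ℕ) : Fin d → Fin (d + 1) := fun i =>
  if (i : ℕ) = 0 then 2 else if (i : ℕ) = d - 1 then 0 else 1

/-- The partition `(2,2,1,…,1,0,0)`. -/
def part221 (d : ℕ) : Fin d → Fin (d + 1) := fun i =>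
  if (i : ℕ) ≤ 1 then 2 else if d - 2 ≤ (i : ℕ) then 0 else 1

/-- The partition `(d,0,…,0)`. -/
def topPart (d : ℕ) : Fin d → Fin (d + 1) := fun i =>
  if (i : ℕ) = 0 then Fin.last d else 0

/-- `A` written in terms of `|W_ℓ|`. -/
noncomputable def AconstW (F : Type) [Field F] [Fintype F] (d : ℕ) : ℝ :=
  ((Fintype.card F : ℝ) ^ d)⁻¹ *
    ∑ ℓ ∈ Pd d, (dchoose d ℓ : ℝ) ^ 2 * ((Wfin (F := F) ℓ).card : ℝ)

/-- `ω_ℓ = (A − binom(d,ℓ))·binom(d,ℓ)·|W_ℓ|`. -/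
noncomputable def omegaW (F : Type) [Field F] [Fintype F] {d : ℕ}
    (ℓ : Fin d → Fin (d + 1)) : ℝ :=
  (AconstW F d - (dchoose d ℓ : ℝ)) * (dchoose d ℓ : ℝ) * ((Wfin (F := F) ℓ).card : ℝ)
namespace AuxAconst

variable {d : ℕ}

/-- number of zero entries -/
def zc (n : Fin d → Fin (d + 1)) : ℕ := (univ.filter fun i => (n i : ℕ) = 0).card

/-- compositions of d into d parts -/
def DD (d : ℕ) : Finset (Fin d → Fin (d + 1)) := univ.filter fun n => (∑ i, (n i : ℕ)) = d

/-- the orbit of a tuple under permutations of coordinates -/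
def orb (ℓ : Fin d → Fin (d + 1)) : Finset (Fin d → Fin (d + 1)) :=
  (univ : Finset (Equiv.Perm (Fin d))).image fun σ : Equiv.Perm (Fin d) => ℓ ∘ σ

lemma two_pow_pred_le_factorial (a : ℕ) : 2 ^ (a - 1) ≤ a.factorial := by
  induction a with
  | zero => simp
  | succ b ih =>
    rcases Nat.eq_zero_or_pos b with hb | hb
    · subst hb; simp [Nat.factorial]
    · have : b + 1 - 1 = (b - 1) + 1 := by omega
      rw [this, pow_succ, Nat.factorial_succ]
      calc 2 ^ (b - 1) * 2 ≤ b.factorial * (b + 1) := by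
            exact Nat.mul_le_mul ih (by omega)
        _ = (b + 1) * b.factorial := by ring
  
lemma sum_pred_eq_zc (n : Fin d → Fin (d + 1)) (h : (∑ i, (n i : ℕ)) = d) :
    (∑ i, ((n i : ℕ) - 1)) = zc n := by
  have key : (∑ i, ((n i : ℕ) - 1)) + (∑ i, if (n i : ℕ) = 0 then 0 else 1) = d := by
    have : (∑ i, (((n i : ℕ) - 1) + if (n i : ℕ) = 0 then 0 else 1)) = ∑ i, (n i : ℕ) :=
      Finset.sum_congr rfl fun i _ => by by_cases h0 : (n i : ℕ) = 0 <;> simp [h0] <;> omega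
    rw [Finset.sum_add_distrib] at this
    omega
  have h2 : (∑ i : Fin d, if (n i : ℕ) = 0 then 0 else 1) =
      (univ.filter fun i => ¬ ((n i : ℕ) = 0)).card := by
    rw [Finset.sum_ite, Finset.sum_const, Finset.sum_const]; simp
  have h3 : zc n + (univ.filter fun i => ¬ ((n i : ℕ) = 0)).card = d := by
    rw [zc, Finset.card_filter_add_card_filter_not (fun i => ((n i : ℕ) = 0))]
    simp
  omega

lemma two_pow_zc_le_lfact (n : Fin d → Fin (d + 1)) (h : (∑ i, (n i : ℕ)) = d) :
    2 ^ zc n ≤ lfact n := by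
  rw [← sum_pred_eq_zc n h, ← Finset.prod_pow_eq_pow_sum]
  exact Finset.prod_le_prod' fun i _ => two_pow_pred_le_factorial _

lemma two_pow_zc_mul_dchoose_le (n : Fin d → Fin (d + 1)) (h : (∑ i, (n i : ℕ)) = d) :
    2 ^ zc n * dchoose d n ≤ d.factorial := by
  calc 2 ^ zc n * dchoose d n ≤ lfact n * (d.factorial / lfact n) :=
        Nat.mul_le_mul_right _ (two_pow_zc_le_lfact n h)
    _ ≤ d.factorial := by rw [mul_comm]; exact Nat.div_mul_le_self _ _


lemma dchoose_comp (ℓ : Fin d → Fin (d + 1)) (σ : Equiv.Perm (Fin d)) :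
    dchoose d (ℓ ∘ σ) = dchoose d ℓ := by
  unfold dchoose lfact
  rw [show (∏ i, Nat.factorial ((ℓ ∘ σ) i)) = ∏ i, Nat.factorial (ℓ i) from
    Equiv.prod_comp σ fun i => Nat.factorial (ℓ i)]

lemma filter_card_comp (p : Fin (d + 1) → Prop) [DecidablePred p]
    (ℓ : Fin d → Fin (d + 1)) (σ : Equiv.Perm (Fin d)) :
    (univ.filter fun x => p (ℓ (σ x))).card = (univ.filter fun x => p (ℓ x)).card := by
  apply Finset.card_nbij' (fun x => σ x) (fun x => σ.symm x)
  · intro a ha; simp only [Finset.mem_coe, Finset.mem_filter, Finset.mem_univ, true_and] at ha ⊢; exact ha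
  · intro a ha; simp only [Finset.mem_coe, Finset.mem_filter, Finset.mem_univ, true_and] at ha ⊢
    simpa using ha
  · intro a _; simp
  · intro a _; simp

lemma sorted_mem_iff {f : Fin d → Fin (d + 1)}
    (hf : ∀ i j : Fin d, i ≤ j → (f j : ℕ) ≤ (f i : ℕ)) (c : ℕ) (i : Fin d) :
    c ≤ (f i : ℕ) ↔ (i : ℕ) < (univ.filter fun x => c ≤ (f x : ℕ)).card := by
  constructor
  · intro hc
    have hsub : Finset.Iic i ⊆ univ.filter fun x => c ≤ (f x : ℕ) := fun x hx => by
      simp only [Finset.mem_filter, Finset.mem_univ, true_and]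
      exact le_trans hc (hf x i (Finset.mem_Iic.1 hx))
    have hcard := Finset.card_le_card hsub
    rw [Fin.card_Iic] at hcard; omega
  · intro hc
    by_contra hn
    push_neg at hn
    have hsub : (univ.filter fun x => c ≤ (f x : ℕ)) ⊆ Finset.Iio i := fun x hx => by
      simp only [Finset.mem_filter, Finset.mem_univ, true_and] at hx
      rw [Finset.mem_Iio]
      by_contra hxi
      push_neg at hxi
      exact absurd (le_trans hx (hf i x hxi)) (by omega)
    have hcard := Finset.card_le_card hsub
    rw [Fin.card_Iio] at hcard; omega

lemma sorted_unique {ℓ ℓ' : Fin d → Fin (d + 1)}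
    (h : ∀ i j : Fin d, i ≤ j → (ℓ j : ℕ) ≤ (ℓ i : ℕ))
    (h' : ∀ i j : Fin d, i ≤ j → (ℓ' j : ℕ) ≤ (ℓ' i : ℕ))
    (σ : Equiv.Perm (Fin d)) (heq : ℓ' = ℓ ∘ σ) : ℓ' = ℓ := by
  funext i
  have hcard : ∀ c : ℕ, (univ.filter fun x => c ≤ (ℓ' x : ℕ)).card =
      (univ.filter fun x => c ≤ (ℓ x : ℕ)).card := by
    intro c
    rw [heq]
    exact filter_card_comp (fun v => c ≤ (v : ℕ)) ℓ σ
  apply Fin.ext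
  apply Nat.le_antisymm
  · rw [sorted_mem_iff h (ℓ' i : ℕ) i, ← hcard]
    exact (sorted_mem_iff h' (ℓ' i : ℕ) i).1 le_rfl
  · rw [sorted_mem_iff h' (ℓ i : ℕ) i, hcard]
    exact (sorted_mem_iff h (ℓ i : ℕ) i).1 le_rfl

lemma orb_card_mul_eq (ℓ : Fin d → Fin (d + 1)) :
    (orb ℓ).card * Fintype.card {g : Equiv.Perm (Fin d) // ℓ ∘ g = ℓ} = d.factorial := by
  classical
  have key : ∀ n ∈ orb ℓ,
      ((univ : Finset (Equiv.Perm (Fin d))).filter fun σ : Equiv.Perm (Fin d) => ℓ ∘ ⇑σ = n).card =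
      Fintype.card {g : Equiv.Perm (Fin d) // ℓ ∘ g = ℓ} := by
    intro n hn
    obtain ⟨σ₀, _, rfl⟩ := Finset.mem_image.1 hn
    rw [Fintype.card_subtype]
    apply Finset.card_nbij' (fun σ => σ * σ₀⁻¹) (fun τ => τ * σ₀)
    · intro a ha
      simp only [Finset.mem_coe, Finset.mem_filter, Finset.mem_univ, true_and] at ha ⊢
      funext x
      have := congrFun ha (σ₀⁻¹ x)
      simpa using this
    · intro a ha
      simp only [Finset.mem_coe, Finset.mem_filter, Finset.mem_univ, true_and] at ha ⊢
      funext x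
      have := congrFun ha (σ₀ x)
      simpa using this
    · intro a _; simp [mul_assoc]
    · intro a _; simp [mul_assoc]
  have hsum := Finset.card_eq_sum_card_fiberwise
      (f := fun σ : Equiv.Perm (Fin d) => ℓ ∘ σ) (s := univ) (t := orb ℓ)
      (fun σ _ => Finset.mem_image_of_mem _ (Finset.mem_univ σ))
  have hsum2 : (univ : Finset (Equiv.Perm (Fin d))).card =
      ∑ _n ∈ orb ℓ, Fintype.card {g : Equiv.Perm (Fin d) // ℓ ∘ ⇑g = ℓ} := by
    rw [hsum]
    exact Finset.sum_congr rfl fun n hn => key n hn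
  rw [Finset.sum_const, smul_eq_mul] at hsum2
  have hcu : (univ : Finset (Equiv.Perm (Fin d))).card = d.factorial := by
    rw [Finset.card_univ, Fintype.card_perm, Fintype.card_fin]
  rw [← hcu, hsum2]


lemma prod_bj_eq (ℓ : Fin d → Fin (d + 1)) :
    (bj ℓ 0).factorial * ∏ j ∈ Finset.Icc 1 d, (bj ℓ j).factorial =
      ∏ v : Fin (d + 1), (Fintype.card {i // ℓ i = v}).factorial := by
  have hcard : ∀ v : Fin (d + 1), Fintype.card {i // ℓ i = v} = bj ℓ (v : ℕ) := by
    intro v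
    rw [Fintype.card_subtype, bj]
    congr 1
    apply Finset.filter_congr
    intro i _
    simp [Fin.ext_iff]
  calc (bj ℓ 0).factorial * ∏ j ∈ Finset.Icc 1 d, (bj ℓ j).factorial
      = ∏ m ∈ Finset.range (d + 1), (bj ℓ m).factorial := by
        have hins : Finset.range (d + 1) = insert 0 (Finset.Icc 1 d) := by
          ext m; simp only [Finset.mem_range, Finset.mem_insert, Finset.mem_Icc]; omega
        rw [hins, Finset.prod_insert (by simp)]
    _ = ∏ v : Fin (d + 1), (bj ℓ (v : ℕ)).factorial := (Fin.prod_univ_eq_prod_range _ _).symm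
    _ = ∏ v : Fin (d + 1), (Fintype.card {i // ℓ i = v}).factorial := by
        exact Finset.prod_congr rfl fun v _ => by rw [hcard]

lemma qmultinom_eq_orb_card (ℓ : Fin d → Fin (d + 1)) :
    qmultinom d d ℓ = (orb ℓ).card := by
  classical
  have hX := prod_bj_eq ℓ
  have hstab := DomMulAct.stabilizer_card ℓ
  have horb := orb_card_mul_eq ℓ
  rw [hstab, ← hX] at horb
  have hb0 : b0 d ℓ = bj ℓ 0 := by simp [b0]
  rw [qmultinom, hb0, ← horb]
  exact Nat.mul_div_cancel _ (Nat.pos_of_ne_zero (by positivity))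

lemma orb_subset_DD {ℓ : Fin d → Fin (d + 1)} (hℓ : ℓ ∈ Pd d) : orb ℓ ⊆ DD d := by
  intro n hn
  obtain ⟨σ, _, rfl⟩ := Finset.mem_image.1 hn
  simp only [DD, Finset.mem_filter, Finset.mem_univ, true_and]
  have hsum := (Finset.mem_filter.1 hℓ).2.2
  exact (Equiv.sum_comp σ fun i => ((ℓ i : ℕ))).trans hsum

lemma orb_disjoint {ℓ ℓ' : Fin d → Fin (d + 1)} (hℓ : ℓ ∈ Pd d) (hℓ' : ℓ' ∈ Pd d)
    (hne : ℓ ≠ ℓ') : Disjoint (orb ℓ) (orb ℓ') := by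
  rw [Finset.disjoint_left]
  rintro n hn hn'
  obtain ⟨σ, _, rfl⟩ := Finset.mem_image.1 hn
  obtain ⟨σ', _, heq⟩ := Finset.mem_image.1 hn'
  apply hne
  have hs := (Finset.mem_filter.1 hℓ).2.1
  have hs' := (Finset.mem_filter.1 hℓ').2.1
  have hkey : ℓ' = ℓ ∘ ⇑(σ * σ'⁻¹ : Equiv.Perm (Fin d)) := by
    funext x
    simpa using congrFun heq (σ'⁻¹ x)
  exact (sorted_unique hs hs' _ hkey).symm

lemma sum_sq_le_DD :
    (∑ ℓ ∈ Pd d, (dchoose d ℓ) ^ 2 * qmultinom d d ℓ) ≤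
      ∑ n ∈ DD d, (dchoose d n) ^ 2 := by
  classical
  have step1 : ∀ ℓ ∈ Pd d, (dchoose d ℓ) ^ 2 * qmultinom d d ℓ =
      ∑ n ∈ orb ℓ, (dchoose d n) ^ 2 := by
    intro ℓ _
    have hconst : ∀ n ∈ orb ℓ, (dchoose d n) ^ 2 = (dchoose d ℓ) ^ 2 := by
      intro n hn
      obtain ⟨σ, _, rfl⟩ := Finset.mem_image.1 hn
      rw [dchoose_comp]
    rw [Finset.sum_congr rfl hconst, Finset.sum_const, smul_eq_mul,
      qmultinom_eq_orb_card, mul_comm]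
  rw [Finset.sum_congr rfl step1, ← Finset.sum_biUnion
    (fun x hx y hy hxy => orb_disjoint hx hy hxy)]
  apply Finset.sum_le_sum_of_subset
  intro n hn
  obtain ⟨ℓ, hℓ, hnℓ⟩ := Finset.mem_biUnion.1 hn
  exact orb_subset_DD hℓ hnℓ

lemma sum_dchoose_DD : (∑ n ∈ DD d, dchoose d n) = d ^ d := by
  classical
  have hmt := Finset.sum_pow_eq_sum_piAntidiag (univ : Finset (Fin d)) (fun _ => (1 : ℕ)) d
  simp only [Finset.sum_const, Finset.card_univ, Fintype.card_fin, smul_eq_mul, mul_one,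
    one_pow, Finset.prod_const_one, Nat.cast_id] at hmt
  rw [hmt]
  apply Finset.sum_nbij' (i := fun n x => ((n x : ℕ)))
    (j := fun c x => (⟨min (c x) d, by omega⟩ : Fin (d + 1)))
  · intro n hn
    simp only [DD, Finset.mem_filter, Finset.mem_univ, true_and] at hn
    simp only [Finset.mem_piAntidiag]
    exact ⟨hn, fun i _ => Finset.mem_univ i⟩
  · intro c hc
    simp only [Finset.mem_piAntidiag] at hc
    simp only [DD, Finset.mem_filter, Finset.mem_univ, true_and]
    have hstep : (∑ x : Fin d, ((⟨min (c x) d, by omega⟩ : Fin (d + 1)) : ℕ)) = ∑ x, c x := by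
      apply Finset.sum_congr rfl
      intro x _
      have hcx : c x ≤ d := le_of_le_of_eq
        (Finset.single_le_sum (fun i _ => Nat.zero_le (c i)) (Finset.mem_univ x)) hc.1
      simp [Nat.min_eq_left hcx]
    exact hstep.trans hc.1
  · intro n hn
    funext x
    apply Fin.ext
    simp only []
    have : (n x : ℕ) ≤ d := by omega
    simp [Nat.min_eq_left this]
  · intro c hc
    simp only [Finset.mem_piAntidiag] at hc
    funext x
    have hcx : c x ≤ d := le_of_le_of_eq
      (Finset.single_le_sum (fun i _ => Nat.zero_le (c i)) (Finset.mem_univ x)) hc.1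
    simp [Nat.min_eq_left hcx]
  · intro n hn
    simp only [DD, Finset.mem_filter, Finset.mem_univ, true_and] at hn
    rw [dchoose, Nat.multinomial, hn, lfact]


/-- encoding of a composition by its zero set and multiset of excesses -/
def enc (n : Fin d → Fin (d + 1)) : Finset (Fin d) × Multiset (Fin d) :=
  (univ.filter fun i => (n i : ℕ) = 0, ∑ i : Fin d, Multiset.replicate ((n i : ℕ) - 1) i)

lemma enc_count (n : Fin d → Fin (d + 1)) (x : Fin d) :
    Multiset.count x (∑ i : Fin d, Multiset.replicate ((n i : ℕ) - 1) i) = (n x : ℕ) - 1 := by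
  rw [Multiset.count_sum']
  rw [Finset.sum_congr rfl fun i _ => Multiset.count_replicate x i ((n i : ℕ) - 1)]
  simp

lemma card_finset_sum_multiset {β : Type*} (s : Finset β) (f : β → Multiset (Fin d)) :
    Multiset.card (∑ i ∈ s, f i) = ∑ i ∈ s, Multiset.card (f i) := by
  classical
  induction s using Finset.cons_induction with
  | empty => simp
  | cons a s ha ih => rw [Finset.sum_cons, Finset.sum_cons, Multiset.card_add, ih]

lemma count_stratum (z : ℕ) (hz : z ≤ d) :
    (((DD d).filter fun n => zc n = z).card) ≤ 2 ^ z * d ^ (2 * z) := by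
  classical
  set T2 : Finset (Multiset (Fin d)) :=
    Finset.image Sym.toMultiset (univ : Finset (Sym (Fin d) z)) with hT2
  set T : Finset (Finset (Fin d) × Multiset (Fin d)) :=
    (Finset.powersetCard z (univ : Finset (Fin d))) ×ˢ T2 with hT
  have hmaps : ∀ n ∈ (DD d).filter fun n => zc n = z, enc n ∈ T := by
    intro n hn
    simp only [Finset.mem_filter, DD, Finset.mem_univ, true_and] at hn
    obtain ⟨hsum, hzc⟩ := hn
    rw [hT, Finset.mem_product]
    constructor
    · rw [Finset.mem_powersetCard]
      exact ⟨Finset.subset_univ _, hzc⟩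
    · rw [hT2, Finset.mem_image]
      have hcard : Multiset.card (∑ i : Fin d, Multiset.replicate ((n i : ℕ) - 1) i) = z := by
        rw [card_finset_sum_multiset]
        rw [Finset.sum_congr rfl fun i (_ : i ∈ univ) =>
          Multiset.card_replicate ((n i : ℕ) - 1) i]
        rw [sum_pred_eq_zc n hsum, hzc]
      exact ⟨⟨_, hcard⟩, Finset.mem_univ _, rfl⟩
  have hinj : Set.InjOn enc (((DD d).filter fun n => zc n = z :
      Finset (Fin d → Fin (d + 1))) : Set (Fin d → Fin (d + 1))) := by
    intro a ha b hb hab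
    simp only [Finset.coe_filter, Set.mem_setOf_eq] at ha hb
    have h1 := congrArg Prod.fst hab
    have h2 := congrArg Prod.snd hab
    simp only [enc] at h1 h2
    funext x
    apply Fin.ext
    by_cases hx : (a x : ℕ) = 0
    · have hx' : x ∈ univ.filter fun i => (b i : ℕ) = 0 := by
        rw [← h1]; simpa using hx
      simp only [Finset.mem_filter] at hx'
      omega
    · have hx' : ¬ ((b x : ℕ) = 0) := by
        intro hb0
        have : x ∈ univ.filter fun i => (a i : ℕ) = 0 := by
          rw [h1]; simpa using hb0
        simp only [Finset.mem_filter] at this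
        omega
      have hc : (a x : ℕ) - 1 = (b x : ℕ) - 1 := by
        rw [← enc_count a x, ← enc_count b x, h2]
      omega
  have hle := Finset.card_le_card_of_injOn enc hmaps hinj
  have hTcard : T.card = (Nat.choose d z) * Nat.multichoose d z := by
    rw [hT, Finset.card_product, Finset.card_powersetCard, Finset.card_univ, Fintype.card_fin]
    congr 1
    rw [hT2, Finset.card_image_of_injective _ (fun s t hst => Sym.coe_injective hst),
      Finset.card_univ, Sym.card_sym_eq_multichoose, Fintype.card_fin]
  have hbound : (Nat.choose d z) * Nat.multichoose d z ≤ 2 ^ z * d ^ (2 * z) := by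
    have h1 : Nat.choose d z ≤ d ^ z := Nat.choose_le_pow d z
    have h2 : Nat.multichoose d z ≤ (2 * d) ^ z := by
      rw [Nat.multichoose_eq]
      calc (d + z - 1).choose z ≤ (d + z - 1) ^ z := Nat.choose_le_pow _ z
        _ ≤ (2 * d) ^ z := Nat.pow_le_pow_left (by omega) z
    calc (Nat.choose d z) * Nat.multichoose d z ≤ d ^ z * (2 * d) ^ z :=
        Nat.mul_le_mul h1 h2
      _ = 2 ^ z * d ^ (2 * z) := by rw [mul_pow, two_mul, pow_add]; ring
  omega


lemma geom_aux (x : ℝ) (hx : 2 ≤ x) (t : ℕ) :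
    (∑ z ∈ Finset.range (t + 1), x ^ z) ≤ 2 * x ^ t := by
  induction t with
  | zero =>
    show (∑ z ∈ Finset.range 1, x ^ z) ≤ 2 * x ^ 0
    rw [Finset.sum_range_one]
    norm_num
  | succ t ih =>
    rw [Finset.sum_range_succ]
    have h1 : 2 * x ^ t ≤ x ^ (t + 1) := by
      rw [pow_succ, mul_comm (x ^ t) x]
      apply mul_le_mul_of_nonneg_right hx (by positivity)
    calc (∑ z ∈ Finset.range (t + 1), x ^ z) + x ^ (t + 1) ≤ x ^ (t+1) + x ^ (t+1) := by
          linarith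
      _ = 2 * x ^ (t + 1) := by ring

end AuxAconst

open AuxAconst in
theorem Aconst_upper_bound_at_q_eq_d'
    {d k : ℕ} (hd : 2 ≤ d) (hk1 : 1 ≤ k) (hkd : k ≤ d) :
    ((d : ℝ) ^ d)⁻¹ * ∑ ℓ ∈ Pd d, (dchoose d ℓ : ℝ) ^ 2 * (qmultinom d d ℓ : ℝ) ≤
      (d.factorial : ℝ) *
        ((d.factorial : ℝ) * ((d : ℝ) ^ k)⁻¹ * (Fintype.card (Nat.Partition (d - k)) : ℝ) +
          ((2 : ℝ) ^ (((d - k : ℕ) : ℝ) / 2))⁻¹) := by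
  classical
  set j : ℕ := d - k with hj
  set t₀ : ℕ := (j + 1) / 2 with ht₀
  have hdR : (0:ℝ) < (d:ℝ) := by positivity
  -- Step 1: pass to the composition sum
  have hstep1 : (∑ ℓ ∈ Pd d, (dchoose d ℓ : ℝ) ^ 2 * (qmultinom d d ℓ : ℝ)) ≤
      ((∑ n ∈ DD d, (dchoose d n) ^ 2 : ℕ) : ℝ) := by
    have := sum_sq_le_DD (d := d)
    calc (∑ ℓ ∈ Pd d, (dchoose d ℓ : ℝ) ^ 2 * (qmultinom d d ℓ : ℝ))
        = ((∑ ℓ ∈ Pd d, (dchoose d ℓ) ^ 2 * (qmultinom d d ℓ) : ℕ) : ℝ) := by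
          push_cast
          try ring
      _ ≤ _ := by exact_mod_cast this
  -- split into main and tail
  have hsplit : (∑ n ∈ DD d, (dchoose d n) ^ 2 : ℕ) =
      (∑ n ∈ (DD d).filter fun n => zc n < t₀, (dchoose d n) ^ 2) +
      (∑ n ∈ (DD d).filter fun n => ¬ (zc n < t₀), (dchoose d n) ^ 2) :=
    (Finset.sum_filter_add_sum_filter_not _ _ _).symm
  -- per-element bound in a stratum
  have hper : ∀ n ∈ DD d, (dchoose d n : ℝ) ≤ (d.factorial : ℝ) / 2 ^ (zc n) := by
    intro n hn
    have hn' : (∑ i, (n i : ℕ)) = d := by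
      simpa [DD] using hn
    have := two_pow_zc_mul_dchoose_le n hn'
    rw [le_div_iff₀ (by positivity)]
    calc (dchoose d n : ℝ) * 2 ^ zc n = ((2 ^ zc n * dchoose d n : ℕ) : ℝ) := by
          push_cast; ring
      _ ≤ (d.factorial : ℝ) := by exact_mod_cast this
  -- main part
  have ht₀d : t₀ ≤ d := by omega
  have hmain : ((∑ n ∈ (DD d).filter fun n => zc n < t₀, (dchoose d n) ^ 2 : ℕ) : ℝ) ≤
      (d.factorial : ℝ) ^ 2 * (d : ℝ) ^ j := by
    have hbU : ((DD d).filter fun n => zc n < t₀) =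
        (Finset.range t₀).biUnion fun z => (DD d).filter fun n => zc n = z := by
      ext n
      simp only [Finset.mem_filter, Finset.mem_biUnion, Finset.mem_range]
      constructor
      · rintro ⟨h1, h2⟩; exact ⟨zc n, h2, h1, rfl⟩
      · rintro ⟨z, hz, h1, rfl⟩; exact ⟨h1, hz⟩
    have hdisj : ∀ z₁ ∈ Finset.range t₀, ∀ z₂ ∈ Finset.range t₀, z₁ ≠ z₂ →
        Disjoint ((DD d).filter fun n => zc n = z₁) ((DD d).filter fun n => zc n = z₂) := by
      intro z₁ _ z₂ _ hne
      rw [Finset.disjoint_left]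
      intro a ha ha'
      simp only [Finset.mem_filter] at ha ha'
      exact hne (ha.2 ▸ ha'.2 ▸ rfl)
    rw [hbU]
    push_cast
    rw [Finset.sum_biUnion hdisj]
    have hstr : ∀ z ∈ Finset.range t₀,
        (∑ n ∈ (DD d).filter fun n => zc n = z, (dchoose d n : ℝ) ^ 2) ≤
          (d.factorial : ℝ) ^ 2 * ((d : ℝ) ^ 2 / 2) ^ z := by
      intro z hz
      have hzd : z ≤ d := by
        have := Finset.mem_range.1 hz; omega
      have hcb := count_stratum (d := d) z hzd
      have hone : ∀ n ∈ (DD d).filter fun n => zc n = z,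
          (dchoose d n : ℝ) ^ 2 ≤ ((d.factorial : ℝ) / 2 ^ z) ^ 2 := by
        intro n hn
        simp only [Finset.mem_filter] at hn
        have h1 := hper n hn.1
        rw [hn.2] at h1
        exact pow_le_pow_left₀ (by positivity) h1 2
      calc (∑ n ∈ (DD d).filter fun n => zc n = z, (dchoose d n : ℝ) ^ 2)
          ≤ (((DD d).filter fun n => zc n = z).card : ℝ) * ((d.factorial : ℝ) / 2 ^ z) ^ 2 := by
            have := Finset.sum_le_card_nsmul _ _ _ hone
            simpa [nsmul_eq_mul] using this
        _ ≤ ((2 ^ z * d ^ (2 * z) : ℕ) : ℝ) * ((d.factorial : ℝ) / 2 ^ z) ^ 2 := by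
            apply mul_le_mul_of_nonneg_right _ (by positivity)
            exact_mod_cast hcb
        _ = (d.factorial : ℝ) ^ 2 * ((d : ℝ) ^ 2 / 2) ^ z := by
            push_cast
            simp only [div_pow, pow_mul]
            field_simp
    calc (∑ z ∈ Finset.range t₀, ∑ n ∈ (DD d).filter fun n => zc n = z, (dchoose d n : ℝ) ^ 2)
        ≤ ∑ z ∈ Finset.range t₀, (d.factorial : ℝ) ^ 2 * ((d : ℝ) ^ 2 / 2) ^ z :=
          Finset.sum_le_sum hstr
      _ = (d.factorial : ℝ) ^ 2 * ∑ z ∈ Finset.range t₀, ((d : ℝ) ^ 2 / 2) ^ z := by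
          rw [Finset.mul_sum]
      _ ≤ (d.factorial : ℝ) ^ 2 * (d : ℝ) ^ j := by
          apply mul_le_mul_of_nonneg_left _ (by positivity)
          have hx : (2:ℝ) ≤ (d : ℝ) ^ 2 / 2 := by
            rw [le_div_iff₀ (by norm_num)]
            have : (2:ℝ) ≤ (d:ℝ) := by exact_mod_cast hd
            nlinarith
          rcases Nat.eq_zero_or_pos t₀ with h0 | hpos
          · rw [h0]
            simp only [Finset.range_zero, Finset.sum_empty]
            positivity
          · obtain ⟨s, hs⟩ : ∃ s, t₀ = s + 1 := ⟨t₀ - 1, by omega⟩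
            rw [hs]
            have hgeo := geom_aux _ hx s
            have h2s : 2 * s + 1 ≤ j := by omega
            have hfin : 2 * ((d : ℝ) ^ 2 / 2) ^ s ≤ (d : ℝ) ^ j := by
              rcases Nat.eq_zero_or_pos s with hs0 | hspos
              · subst hs0
                simp only [pow_zero, mul_one]
                calc (2:ℝ) ≤ (d:ℝ) := by exact_mod_cast hd
                  _ = (d:ℝ) ^ 1 := (pow_one _).symm
                  _ ≤ (d:ℝ) ^ j := pow_le_pow_right₀ (by exact_mod_cast Nat.one_le_of_lt hd) (by omega)
              · have hdd : ((d : ℝ) ^ 2 / 2) ^ s ≤ ((d : ℝ) ^ 2) ^ s / 2 := by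
                  rw [div_pow]
                  apply div_le_div_of_nonneg_left (by positivity) (by norm_num)
                  calc (2:ℝ) = 2 ^ 1 := (pow_one _).symm
                    _ ≤ 2 ^ s := by
                        apply pow_le_pow_right₀ (by norm_num) hspos
                calc 2 * ((d : ℝ) ^ 2 / 2) ^ s ≤ 2 * (((d : ℝ) ^ 2) ^ s / 2) := by linarith
                  _ = ((d : ℝ) ^ 2) ^ s := by ring
                  _ = (d : ℝ) ^ (2 * s) := by rw [← pow_mul]
                  _ ≤ (d : ℝ) ^ j := pow_le_pow_right₀ (by exact_mod_cast Nat.one_le_of_lt hd) (by omega)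
            linarith
  -- tail part
  have htail : ((∑ n ∈ (DD d).filter fun n => ¬ (zc n < t₀), (dchoose d n) ^ 2 : ℕ) : ℝ) ≤
      ((d.factorial : ℝ) / 2 ^ t₀) * (d : ℝ) ^ d := by
    push_cast
    have hone : ∀ n ∈ (DD d).filter fun n => ¬ (zc n < t₀),
        (dchoose d n : ℝ) ^ 2 ≤ ((d.factorial : ℝ) / 2 ^ t₀) * (dchoose d n : ℝ) := by
      intro n hn
      simp only [Finset.mem_filter, not_lt] at hn
      have h1 := hper n hn.1
      have h2 : (d.factorial : ℝ) / 2 ^ (zc n) ≤ (d.factorial : ℝ) / 2 ^ t₀ := by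
        apply div_le_div_of_nonneg_left (by positivity) (by positivity)
        exact pow_le_pow_right₀ (by norm_num) hn.2
      rw [pow_two]
      apply mul_le_mul_of_nonneg_right (h1.trans h2) (by positivity)
    calc (∑ n ∈ (DD d).filter fun n => ¬ (zc n < t₀), (dchoose d n : ℝ) ^ 2)
        ≤ ∑ n ∈ (DD d).filter fun n => ¬ (zc n < t₀),
            ((d.factorial : ℝ) / 2 ^ t₀) * (dchoose d n : ℝ) := Finset.sum_le_sum hone
      _ = ((d.factorial : ℝ) / 2 ^ t₀) *
            ∑ n ∈ (DD d).filter fun n => ¬ (zc n < t₀), (dchoose d n : ℝ) := by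
          rw [Finset.mul_sum]
      _ ≤ ((d.factorial : ℝ) / 2 ^ t₀) * (d : ℝ) ^ d := by
          apply mul_le_mul_of_nonneg_left _ (by positivity)
          calc (∑ n ∈ (DD d).filter fun n => ¬ (zc n < t₀), (dchoose d n : ℝ))
              ≤ ∑ n ∈ DD d, (dchoose d n : ℝ) := by
                apply Finset.sum_le_sum_of_subset_of_nonneg (Finset.filter_subset _ _)
                intro i _ _; positivity
            _ = (d : ℝ) ^ d := by
                rw [← Nat.cast_sum]
                rw [sum_dchoose_DD (d := d)]
                push_cast; ring
  -- assemble
  have hdpow : (0:ℝ) < (d:ℝ) ^ d := by positivity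
  have hjk : (d : ℝ) ^ j * (d : ℝ) ^ k = (d : ℝ) ^ d := by
    rw [← pow_add]
    congr 1
    omega
  have hfinal : ((d : ℝ) ^ d)⁻¹ *
      ∑ ℓ ∈ Pd d, (dchoose d ℓ : ℝ) ^ 2 * (qmultinom d d ℓ : ℝ) ≤
      (d.factorial : ℝ) ^ 2 * ((d : ℝ) ^ k)⁻¹ + (d.factorial : ℝ) / 2 ^ t₀ := by
    have hsum : (∑ ℓ ∈ Pd d, (dchoose d ℓ : ℝ) ^ 2 * (qmultinom d d ℓ : ℝ)) ≤
        (d.factorial : ℝ) ^ 2 * (d : ℝ) ^ j + ((d.factorial : ℝ) / 2 ^ t₀) * (d : ℝ) ^ d := by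
      calc (∑ ℓ ∈ Pd d, (dchoose d ℓ : ℝ) ^ 2 * (qmultinom d d ℓ : ℝ))
          ≤ ((∑ n ∈ DD d, (dchoose d n) ^ 2 : ℕ) : ℝ) := hstep1
        _ = ((∑ n ∈ (DD d).filter fun n => zc n < t₀, (dchoose d n) ^ 2 : ℕ) : ℝ) +
            ((∑ n ∈ (DD d).filter fun n => ¬ (zc n < t₀), (dchoose d n) ^ 2 : ℕ) : ℝ) := by
            rw [hsplit]; push_cast; ring
        _ ≤ _ := add_le_add hmain htail
    rw [inv_mul_le_iff₀ hdpow]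
    have h1 : ((d : ℝ) ^ k)⁻¹ * (d : ℝ) ^ d = (d : ℝ) ^ j := by
      rw [← hjk]
      have hk0 : ((d:ℝ) ^ k) ≠ 0 := by positivity
      field_simp
    calc (∑ ℓ ∈ Pd d, (dchoose d ℓ : ℝ) ^ 2 * (qmultinom d d ℓ : ℝ))
        ≤ (d.factorial : ℝ) ^ 2 * (d : ℝ) ^ j + ((d.factorial : ℝ) / 2 ^ t₀) * (d : ℝ) ^ d :=
          hsum
      _ = ((d.factorial : ℝ) ^ 2 * ((d : ℝ) ^ k)⁻¹ + (d.factorial : ℝ) / 2 ^ t₀) * (d : ℝ) ^ d := by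
          rw [add_mul, mul_assoc ((d.factorial : ℝ) ^ 2) _ _, h1]
      _ = (d : ℝ) ^ d * ((d.factorial : ℝ) ^ 2 * ((d : ℝ) ^ k)⁻¹ + (d.factorial : ℝ) / 2 ^ t₀) := by
          ring
  have hP : (1:ℝ) ≤ (Fintype.card (Nat.Partition (d - k)) : ℝ) := by
    have : 0 < Fintype.card (Nat.Partition (d - k)) := Fintype.card_pos
    exact_mod_cast this
  have h2t : (2:ℝ) ^ (((d - k : ℕ) : ℝ) / 2) ≤ (2:ℝ) ^ t₀ := by
    rw [show ((2:ℝ) ^ t₀) = (2:ℝ) ^ ((t₀ : ℕ) : ℝ) from (Real.rpow_natCast 2 t₀).symm]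
    apply Real.rpow_le_rpow_of_exponent_le one_le_two
    have hj2 : (d - k : ℕ) ≤ 2 * t₀ := by omega
    rw [div_le_iff₀ (by norm_num : (0:ℝ) < 2)]
    calc ((d - k : ℕ) : ℝ) ≤ ((2 * t₀ : ℕ) : ℝ) := by exact_mod_cast hj2
      _ = (t₀ : ℝ) * 2 := by push_cast; ring
  have h2tpos : (0:ℝ) < (2:ℝ) ^ (((d - k : ℕ) : ℝ) / 2) := Real.rpow_pos_of_pos (by norm_num) _
  have herr : (d.factorial : ℝ) / 2 ^ t₀ ≤
      (d.factorial : ℝ) * ((2:ℝ) ^ (((d - k : ℕ) : ℝ) / 2))⁻¹ := by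
    rw [div_eq_mul_inv]
    apply mul_le_mul_of_nonneg_left _ (by positivity)
    exact inv_anti₀ h2tpos h2t
  calc ((d : ℝ) ^ d)⁻¹ * ∑ ℓ ∈ Pd d, (dchoose d ℓ : ℝ) ^ 2 * (qmultinom d d ℓ : ℝ)
      ≤ (d.factorial : ℝ) ^ 2 * ((d : ℝ) ^ k)⁻¹ + (d.factorial : ℝ) / 2 ^ t₀ := hfinal
    _ ≤ (d.factorial : ℝ) ^ 2 * ((d : ℝ) ^ k)⁻¹ * (Fintype.card (Nat.Partition (d - k)) : ℝ) +
        (d.factorial : ℝ) * ((2:ℝ) ^ (((d - k : ℕ) : ℝ) / 2))⁻¹ := by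
        apply add_le_add _ herr
        calc (d.factorial : ℝ) ^ 2 * ((d : ℝ) ^ k)⁻¹
            = (d.factorial : ℝ) ^ 2 * ((d : ℝ) ^ k)⁻¹ * 1 := by ring
          _ ≤ (d.factorial : ℝ) ^ 2 * ((d : ℝ) ^ k)⁻¹ *
              (Fintype.card (Nat.Partition (d - k)) : ℝ) := by
              apply mul_le_mul_of_nonneg_left hP (by positivity)
    _ = (d.factorial : ℝ) *
        ((d.factorial : ℝ) * ((d : ℝ) ^ k)⁻¹ * (Fintype.card (Nat.Partition (d - k)) : ℝ) +
          ((2 : ℝ) ^ (((d - k : ℕ) : ℝ) / 2))⁻¹) := by ring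


theorem Aconst_upper_bound_at_q_eq_d
    {d k : ℕ} (hd : 2 ≤ d) (hk1 : 1 ≤ k) (hkd : k ≤ d) :
    ((d : ℝ) ^ d)⁻¹ * ∑ ℓ ∈ Pd d, (dchoose d ℓ : ℝ) ^ 2 * (qmultinom d d ℓ : ℝ) ≤
      (d.factorial : ℝ) *
        ((d.factorial : ℝ) * ((d : ℝ) ^ k)⁻¹ * (Fintype.card (Nat.Partition (d - k)) : ℝ) +
          ((2 : ℝ) ^ (((d - k : ℕ) : ℝ) / 2))⁻¹) := by
  exact Aconst_upper_bound_at_q_eq_d' hd hk1 hkd
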